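/- For the d-regular tree T_d, the URW localization threshold equals σ*(T_d) = d/f_{oo}(1/d) = (d − 1) − 1/(d − 1), and the ℓ²-eigenvector threshold equals σ_{ℓ²}(T_d) = 2√(d−1)/f_{oo}(1/(2√(d−1))) = √(d−1) − 1/√(d−1). In particular, for d ≥ 3, σ_{ℓ²}(T_d) < σ*(T_d). -/

import Mathlib

open Filter Topology Classical

open Classical in
noncomputable def matPow {V : Type*} (M : V → V → ℝ) : ℕ → V → V → ℝ
  | 0 => fun x y => if x = y then 1 else 0
  | n+1 => fun x y => ∑' z, M x z * matPow M n z y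

noncomputable def genFun {V : Type*} (M : V → V → ℝ) (t : ℝ) (x y : V) : ℝ :=
  ∑' n : ℕ, matPow M n x y * t^n

open Classical in
noncomputable def adjMat {V : Type*} (G : SimpleGraph V) : V → V → ℝ :=
  fun x y => if G.Adj x y then 1 else 0

namespace RegTree
variable {V : Type*}

open Classical in
noncomputable def zadj (G : SimpleGraph V) (S : Set V) : V → V → ℝ :=
  fun x y => if x ∈ S then 0 else adjMat G x y

variable (G : SimpleGraph V) [∀ v : V, Fintype (G.neighborSet v)]

lemma zadj_tsum (S : Set V) (x : V) (g : V → ℝ) :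
    ∑' z, zadj G S x z * g z
      = if x ∈ S then 0 else ∑ z ∈ G.neighborFinset x, g z := by
  classical
  by_cases hx : x ∈ S
  · simp [zadj, hx]
  · rw [if_neg hx]
    rw [tsum_eq_sum (s := G.neighborFinset x) (f := fun z => zadj G S x z * g z)]
    · refine Finset.sum_congr rfl fun z hz => ?_
      rw [SimpleGraph.mem_neighborFinset] at hz
      simp [zadj, adjMat, hx, hz]
    · intro z hz
      rw [SimpleGraph.mem_neighborFinset] at hz
      simp [zadj, adjMat, hx, hz]

lemma matPow_zero (M : V → V → ℝ) (x y : V) :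
    matPow M 0 x y = if x = y then 1 else 0 := rfl

lemma matPow_succ (M : V → V → ℝ) (n : ℕ) (x y : V) :
    matPow M (n+1) x y = ∑' z, M x z * matPow M n z y := rfl

lemma zadj_matPow_succ (S : Set V) (n : ℕ) (x y : V) :
    matPow (zadj G S) (n+1) x y
      = if x ∈ S then 0 else ∑ z ∈ G.neighborFinset x, matPow (zadj G S) n z y := by
  rw [matPow_succ, zadj_tsum]

lemma zadj_matPow_mem (S : Set V) {x : V} (hx : x ∈ S) (n : ℕ) (y : V) :
    matPow (zadj G S) (n+1) x y = 0 := by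
  rw [zadj_matPow_succ, if_pos hx]

omit [∀ v : V, Fintype (G.neighborSet v)] in
lemma adjMat_eq_zadj_empty : adjMat G = zadj G (∅ : Set V) := by
  funext x y; simp [zadj]

lemma matPow_nonneg (S : Set V) (n : ℕ) (x y : V) : 0 ≤ matPow (zadj G S) n x y := by
  induction n generalizing x y with
  | zero => rw [matPow_zero]; positivity
  | succ n ih =>
      rw [zadj_matPow_succ]
      split
      · exact le_refl 0
      · exact Finset.sum_nonneg fun z _ => ih z y

end RegTree

namespace RegTree
variable {V : Type*} (G : SimpleGraph V) [∀ v : V, Fintype (G.neighborSet v)]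

lemma dec1 (S : Set V) (y : V) :
    ∀ (n : ℕ) (z : V), matPow (zadj G S) n z y
      = ∑ j ∈ Finset.range (n+1),
          matPow (zadj G (insert y S)) j z y * matPow (zadj G S) (n-j) y y := by
  classical
  intro n
  induction n with
  | zero =>
      intro z
      simp [matPow_zero]
  | succ n ih =>
      intro z
      by_cases hzS : z ∈ S
      · rw [zadj_matPow_mem G S hzS]
        rw [eq_comm, Finset.sum_eq_zero]
        intro j hj
        match j with
        | 0 =>
            simp only [matPow_zero, Nat.sub_zero]
            by_cases hzy : z = y
            · subst hzy; rw [zadj_matPow_mem G S hzS]; ring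
            · rw [if_neg hzy]; ring
        | (j+1) =>
            rw [zadj_matPow_mem G _ (Set.mem_insert_iff.2 (Or.inr hzS))]
            simp
      · by_cases hzy : z = y
        · subst hzy
          rw [eq_comm, Finset.sum_range_succ']
          rw [Finset.sum_eq_zero (fun i _ => by
            rw [zadj_matPow_mem G _ (Set.mem_insert _ _)]; ring)]
          simp [matPow_zero]
        · rw [zadj_matPow_succ, if_neg hzS]
          have : ∀ w ∈ G.neighborFinset z, matPow (zadj G S) n w y
              = ∑ j ∈ Finset.range (n+1),
                  matPow (zadj G (insert y S)) j w y * matPow (zadj G S) (n-j) y y :=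
            fun w _ => ih w
          rw [Finset.sum_congr rfl this, Finset.sum_comm]
          rw [eq_comm, Finset.sum_range_succ']
          have hz' : z ∉ insert y S := by
            simp only [Set.mem_insert_iff]; tauto
          have hstep : ∀ i, matPow (zadj G (insert y S)) (i+1) z y
              = ∑ w ∈ G.neighborFinset z, matPow (zadj G (insert y S)) i w y := by
            intro i; rw [zadj_matPow_succ, if_neg hz']
          have hj0 : matPow (zadj G (insert y S)) 0 z y * matPow (zadj G S) (n+1-0) y y = 0 := by
            rw [matPow_zero, if_neg hzy]; ring
          rw [hj0, add_zero]
          refine Finset.sum_congr rfl fun i _ => ?_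
          rw [hstep i, Finset.sum_mul]
          simp [Nat.succ_sub_succ]

end RegTree

namespace RegTree
variable {V : Type*} (G : SimpleGraph V) [∀ v : V, Fintype (G.neighborSet v)]

lemma dec2 (S : Set V) {c y : V} (hcy : c ≠ y) :
    ∀ (n : ℕ) (z : V), matPow (zadj G S) n z y
      = (∑ j ∈ Finset.range (n+1),
          matPow (zadj G (insert c S)) j z c * matPow (zadj G S) (n-j) c y)
        + matPow (zadj G (insert c S)) n z y := by
  classical
  intro n
  induction n with
  | zero =>
      intro z
      simp [matPow_zero, if_neg hcy]
  | succ n ih =>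
      intro z
      by_cases hzS : z ∈ S
      · rw [zadj_matPow_mem G S hzS,
          zadj_matPow_mem G _ (Set.mem_insert_iff.2 (Or.inr hzS)), add_zero]
        rw [eq_comm, Finset.sum_eq_zero]
        intro j hj
        match j with
        | 0 =>
            simp only [matPow_zero, Nat.sub_zero]
            by_cases hzc : z = c
            · subst hzc; rw [zadj_matPow_mem G S hzS]; ring
            · rw [if_neg hzc]; ring
        | (j+1) =>
            rw [zadj_matPow_mem G _ (Set.mem_insert_iff.2 (Or.inr hzS))]
            ring
      · by_cases hzc : z = c
        · subst hzc
          rw [zadj_matPow_mem G _ (Set.mem_insert _ _), add_zero]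
          rw [eq_comm, Finset.sum_range_succ']
          rw [Finset.sum_eq_zero (fun i _ => by
            rw [zadj_matPow_mem G _ (Set.mem_insert _ _)]; ring)]
          simp [matPow_zero]
        · have hz' : z ∉ insert c S := by
            simp only [Set.mem_insert_iff]; tauto
          rw [zadj_matPow_succ, if_neg hzS]
          have : ∀ w ∈ G.neighborFinset z, matPow (zadj G S) n w y
              = (∑ j ∈ Finset.range (n+1),
                  matPow (zadj G (insert c S)) j w c * matPow (zadj G S) (n-j) c y)
                + matPow (zadj G (insert c S)) n w y :=
            fun w _ => ih w
          rw [Finset.sum_congr rfl this, Finset.sum_add_distrib, Finset.sum_comm]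
          have hB : ∀ i, matPow (zadj G (insert c S)) (i+1) z c
              = ∑ w ∈ G.neighborFinset z, matPow (zadj G (insert c S)) i w c := by
            intro i; rw [zadj_matPow_succ, if_neg hz']
          have hBy : matPow (zadj G (insert c S)) (n+1) z y
              = ∑ w ∈ G.neighborFinset z, matPow (zadj G (insert c S)) n w y := by
            rw [zadj_matPow_succ, if_neg hz']
          rw [← hBy, eq_comm, Finset.sum_range_succ']
          have hj0 : matPow (zadj G (insert c S)) 0 z c * matPow (zadj G S) (n+1-0) c y = 0 := by
            rw [matPow_zero, if_neg hzc]; ring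
          rw [hj0, add_zero]
          congr 1
          refine Finset.sum_congr rfl fun i _ => ?_
          rw [hB i, Finset.sum_mul]
          simp [Nat.succ_sub_succ]

lemma sep (S : Set V) {x y : V} (hxy : x ≠ y) (hxS : x ∈ S) :
    ∀ (n : ℕ) (z : V), z ≠ x → (∀ w : G.Walk z y, x ∈ w.support) →
      matPow (zadj G S) n z y = 0 := by
  classical
  intro n
  induction n with
  | zero =>
      intro z hzx hzw
      have hzy : z ≠ y := by
        rintro rfl
        have := hzw SimpleGraph.Walk.nil
        simp at this
        exact hxy this
      rw [matPow_zero, if_neg hzy]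
  | succ n ih =>
      intro z hzx hzw
      rw [zadj_matPow_succ]
      split
      · rfl
      · refine Finset.sum_eq_zero fun w hw => ?_
        rw [SimpleGraph.mem_neighborFinset] at hw
        by_cases hwx : w = x
        · subst hwx
          match n with
          | 0 => rw [matPow_zero, if_neg hxy]
          | (m+1) => exact zadj_matPow_mem G S hxS m y
        · refine ih w hwx fun ww => ?_
          have := hzw (SimpleGraph.Walk.cons hw ww)
          rw [SimpleGraph.Walk.support_cons] at this
          rcases List.mem_cons.1 this with h | h
          · exact absurd h.symm hzx
          · exact h

lemma eq2 {x p : V} (hxp : x ≠ p) :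
    ∀ (n : ℕ) (z : V), z ≠ x → (∀ w : G.Walk z p, x ∈ w.support) →
      matPow (zadj G {x}) n z x = matPow (zadj G ({x, p} : Set V)) n z x := by
  classical
  intro n
  induction n with
  | zero => intro z _ _; rw [matPow_zero, matPow_zero]
  | succ n ih =>
      intro z hzx hzw
      have hzp : z ≠ p := by
        rintro rfl
        have := hzw SimpleGraph.Walk.nil
        simp at this
        exact hxp this
      have hz1 : z ∉ ({x} : Set V) := by simp [hzx]
      have hz2 : z ∉ ({x, p} : Set V) := by simp [hzx, hzp]
      rw [zadj_matPow_succ, if_neg hz1, zadj_matPow_succ, if_neg hz2]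
      refine Finset.sum_congr rfl fun w hw => ?_
      rw [SimpleGraph.mem_neighborFinset] at hw
      by_cases hwx : w = x
      · subst hwx
        match n with
        | 0 => rw [matPow_zero, matPow_zero]
        | (m+1) =>
            rw [zadj_matPow_mem G _ (Set.mem_singleton _),
              zadj_matPow_mem G _ (Set.mem_insert _ _)]
      · refine ih w hwx fun ww => ?_
        have := hzw (SimpleGraph.Walk.cons hw ww)
        rw [SimpleGraph.Walk.support_cons] at this
        rcases List.mem_cons.1 this with h | h
        · exact absurd h.symm hzx
        · exact h

end RegTree

namespace RegTree
variable {V : Type*} (G : SimpleGraph V) [∀ v : V, Fintype (G.neighborSet v)]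

omit [∀ v : V, Fintype (G.neighborSet v)] in
lemma tree_sep (htree : G.IsTree) {x p z : V} (hxp : G.Adj x p) (hxz : G.Adj x z)
    (hzp : z ≠ p) (w : G.Walk z p) : x ∈ w.support := by
  classical
  have hq : (SimpleGraph.Walk.cons hxz.symm
      (SimpleGraph.Walk.cons hxp SimpleGraph.Walk.nil) : G.Walk z p).IsPath := by
    simp [SimpleGraph.Walk.isPath_def, hzp, hxz.ne', hxp.ne]
  have hu : w.bypass = SimpleGraph.Walk.cons hxz.symm
      (SimpleGraph.Walk.cons hxp SimpleGraph.Walk.nil) :=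
    ((htree.existsUnique_path z p).unique w.bypass_isPath hq)
  have hx : x ∈ w.bypass.support := by
    rw [hu]; simp
  exact w.support_bypass_subset hx

lemma fp_rec (htree : G.IsTree) {x p : V} (hxp : G.Adj x p) (n : ℕ) :
    matPow (zadj G {p}) (n+1) x p
      = (if n = 0 then 1 else 0)
        + ∑ z ∈ (G.neighborFinset x).erase p, ∑ j ∈ Finset.range (n+1),
            matPow (zadj G {x}) j z x * matPow (zadj G {p}) (n-j) x p := by
  classical
  have hxP : x ∉ ({p} : Set V) := by simp [hxp.ne]
  rw [zadj_matPow_succ, if_neg hxP]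
  have hp : p ∈ G.neighborFinset x := (SimpleGraph.mem_neighborFinset _ _ _).2 hxp
  rw [← Finset.add_sum_erase _ _ hp]
  congr 1
  · match n with
    | 0 => rw [matPow_zero]; simp
    | (m+1) => rw [zadj_matPow_mem G _ (Set.mem_singleton p)]; simp
  · refine Finset.sum_congr rfl fun z hz => ?_
    have hzp : z ≠ p := Finset.ne_of_mem_erase hz
    have hxz : G.Adj x z := (SimpleGraph.mem_neighborFinset _ _ _).1 (Finset.mem_of_mem_erase hz)
    rw [dec2 G {p} hxp.ne n z]
    have hsep : ∀ w : G.Walk z p, x ∈ w.support := tree_sep G htree hxp hxz hzp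
    rw [sep G (insert x {p}) hxp.ne (Set.mem_insert x {p}) n z hxz.ne' hsep, add_zero]
    refine Finset.sum_congr rfl fun j _ => ?_
    rw [← eq2 G hxp.ne j z hxz.ne' hsep]

lemma fp_eq (htree : G.IsTree) (d : ℕ) (hreg : ∀ v : V, G.degree v = d) :
    ∀ (n : ℕ) {x p x' p' : V}, G.Adj x p → G.Adj x' p' →
      matPow (zadj G {p}) n x p = matPow (zadj G {p'}) n x' p' := by
  classical
  intro n
  induction n using Nat.strong_induction_on with
  | _ n ih =>
      intro x p x' p' h h'
      match n with
      | 0 => rw [matPow_zero, matPow_zero, if_neg h.ne, if_neg h'.ne]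
      | (n+1) =>
          rw [fp_rec G htree h n, fp_rec G htree h' n]
          congr 1
          have key : ∀ {a b : V} (hab : G.Adj a b), ∀ z ∈ (G.neighborFinset a).erase b,
              (∑ j ∈ Finset.range (n+1),
                matPow (zadj G {a}) j z a * matPow (zadj G {b}) (n-j) a b)
              = ∑ j ∈ Finset.range (n+1),
                matPow (zadj G {p'}) j x' p' * matPow (zadj G {p'}) (n-j) x' p' := by
            intro a b hab z hz
            have hza : G.Adj z a :=
              ((SimpleGraph.mem_neighborFinset _ _ _).1 (Finset.mem_of_mem_erase hz)).symm
            refine Finset.sum_congr rfl fun j hj => ?_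
            rw [Finset.mem_range] at hj
            rw [ih j hj hza h', ih (n-j) (Nat.lt_succ_of_le (Nat.sub_le n j)) hab h']
          rw [Finset.sum_congr rfl (key h), Finset.sum_congr rfl (key h'),
            Finset.sum_const, Finset.sum_const]
          have hc : ∀ {a b : V}, G.Adj a b → ((G.neighborFinset a).erase b).card = d - 1 := by
            intro a b hab
            rw [Finset.card_erase_of_mem ((SimpleGraph.mem_neighborFinset _ _ _).2 hab),
              SimpleGraph.card_neighborFinset_eq_degree, hreg]
          rw [hc h, hc h']

end RegTree

namespace RegTree
variable {V : Type*} (G : SimpleGraph V) [∀ v : V, Fintype (G.neighborSet v)]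

lemma f_rec (htree : G.IsTree) (d : ℕ) (hd : 1 ≤ d) (hreg : ∀ v : V, G.degree v = d)
    {z₀ o : V} (h₀ : G.Adj z₀ o) (n : ℕ) :
    matPow (zadj G {o}) (n+1) z₀ o
      = (if n = 0 then (1:ℝ) else 0)
        + ((d:ℝ) - 1) * ∑ j ∈ Finset.range (n+1),
            matPow (zadj G {o}) j z₀ o * matPow (zadj G {o}) (n-j) z₀ o := by
  classical
  rw [fp_rec G htree h₀ n]
  congr 1
  have key : ∀ z ∈ (G.neighborFinset z₀).erase o,
      (∑ j ∈ Finset.range (n+1),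
        matPow (zadj G {z₀}) j z z₀ * matPow (zadj G {o}) (n-j) z₀ o)
      = ∑ j ∈ Finset.range (n+1),
          matPow (zadj G {o}) j z₀ o * matPow (zadj G {o}) (n-j) z₀ o := by
    intro z hz
    have hza : G.Adj z z₀ :=
      ((SimpleGraph.mem_neighborFinset _ _ _).1 (Finset.mem_of_mem_erase hz)).symm
    refine Finset.sum_congr rfl fun j _ => ?_
    rw [fp_eq G htree d hreg j hza h₀]
  rw [Finset.sum_congr rfl key, Finset.sum_const,
    Finset.card_erase_of_mem ((SimpleGraph.mem_neighborFinset _ _ _).2 h₀),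
    SimpleGraph.card_neighborFinset_eq_degree, hreg]
  rw [nsmul_eq_mul, Nat.cast_sub hd, Nat.cast_one]

lemma u_rec (htree : G.IsTree) (d : ℕ) (hreg : ∀ v : V, G.degree v = d)
    {z₀ o : V} (h₀ : G.Adj z₀ o) (n : ℕ) :
    matPow (adjMat G) (n+1) o o
      = (d:ℝ) * ∑ j ∈ Finset.range (n+1),
          matPow (zadj G {o}) j z₀ o * matPow (adjMat G) (n-j) o o := by
  classical
  rw [adjMat_eq_zadj_empty]
  rw [zadj_matPow_succ, if_neg (Set.notMem_empty o)]
  have key : ∀ z ∈ G.neighborFinset o,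
      matPow (zadj G (∅ : Set V)) n z o
        = ∑ j ∈ Finset.range (n+1),
            matPow (zadj G {o}) j z₀ o * matPow (zadj G (∅ : Set V)) (n-j) o o := by
    intro z hz
    have hzo : G.Adj z o := ((SimpleGraph.mem_neighborFinset _ _ _).1 hz).symm
    rw [dec1 G (∅ : Set V) o n z]
    refine Finset.sum_congr rfl fun j _ => ?_
    rw [LawfulSingleton.insert_empty_eq]
    rw [fp_eq G htree d hreg j hzo h₀]
  rw [Finset.sum_congr rfl key, Finset.sum_const,
    SimpleGraph.card_neighborFinset_eq_degree, hreg, nsmul_eq_mul]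

lemma u_zero (o : V) : matPow (adjMat G) 0 o o = 1 := by
  rw [matPow_zero, if_pos rfl]

lemma f_zero {z₀ o : V} (h₀ : G.Adj z₀ o) : matPow (zadj G {o}) 0 z₀ o = 0 := by
  rw [matPow_zero, if_neg h₀.ne]

lemma u_nonneg (o : V) (n : ℕ) : 0 ≤ matPow (adjMat G) n o o := by
  rw [adjMat_eq_zadj_empty]; exact matPow_nonneg G _ n o o

lemma f_nonneg {z₀ o : V} (n : ℕ) : 0 ≤ matPow (zadj G {o}) n z₀ o :=
  matPow_nonneg G _ n z₀ o

end RegTree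

namespace RegTree

lemma analytic (d : ℕ) (hd : 3 ≤ d) (u f : ℕ → ℝ)
    (hu0 : u 0 = 1) (hun : ∀ n, 0 ≤ u n) (hfn : ∀ n, 0 ≤ f n) (hf0 : f 0 = 0)
    (hurec : ∀ n, u (n+1) = d * ∑ j ∈ Finset.range (n+1), f j * u (n-j))
    (hfrec : ∀ n, f (n+1) = (if n = 0 then (1:ℝ) else 0)
        + ((d:ℝ)-1) * ∑ j ∈ Finset.range (n+1), f j * f (n-j))
    (t : ℝ) (ht : 0 < t) (hsum : Summable (fun n => u n * t^n)) :
    Summable (fun n => f n * t^n)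
    ∧ (∑' n, f n * t^n) = t + ((d:ℝ)-1) * t * (∑' n, f n * t^n)^2
    ∧ (∑' n, u n * t^n) * (1 - d * t * (∑' n, f n * t^n)) = 1
    ∧ 1 ≤ ∑' n, u n * t^n := by
  have hd0 : (0:ℝ) < d := by positivity
  set F : ℕ → ℝ := fun n => f n * t^n with hF
  set Uf : ℕ → ℝ := fun n => u n * t^n with hUf
  have hFpos : ∀ n, 0 ≤ F n := fun n => mul_nonneg (hfn n) (pow_nonneg ht.le n)
  have hUpos : ∀ n, 0 ≤ Uf n := fun n => mul_nonneg (hun n) (pow_nonneg ht.le n)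
  -- f n ≤ u (n+1) / d
  have hfu : ∀ n, f n ≤ u (n+1) / d := by
    intro n
    rw [le_div_iff₀ hd0, hurec n]
    have h1 : f n * u (n - n) ≤ ∑ j ∈ Finset.range (n+1), f j * u (n-j) :=
      Finset.single_le_sum (f := fun j => f j * u (n-j))
        (fun j _ => mul_nonneg (hfn j) (hun _)) (Finset.self_mem_range_succ n)
    rw [Nat.sub_self, hu0, mul_one] at h1
    calc f n * d = d * f n := by ring
    _ ≤ d * ∑ j ∈ Finset.range (n+1), f j * u (n-j) :=
        mul_le_mul_of_nonneg_left h1 hd0.le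
  -- summability of F
  have hFs : Summable F := by
    have h1 : Summable (fun n => u (n+1) * t^(n+1)) := by
      exact (summable_nat_add_iff (f := fun n => u n * t^n) 1).2 hsum
    have h2 : Summable (fun n => (1/(d*t)) * (u (n+1) * t^(n+1))) := h1.mul_left _
    refine h2.of_nonneg_of_le hFpos fun n => ?_
    have : f n * t^n ≤ (u (n+1)/d) * t^n :=
      mul_le_mul_of_nonneg_right (hfu n) (pow_nonneg ht.le n)
    refine this.trans (le_of_eq ?_)
    field_simp
    ring
  have hFnorm : Summable (fun n => ‖f n * t^n‖) :=
    hFs.congr fun n => (Real.norm_of_nonneg (hFpos n)).symm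
  have hUnorm : Summable (fun n => ‖u n * t^n‖) :=
    hsum.congr fun n => (Real.norm_of_nonneg (hUpos n)).symm
  -- convolution rewrites
  have hconvF : ∀ n, (∑ j ∈ Finset.range (n+1), f j * f (n-j)) * t^n
      = ∑ j ∈ Finset.range (n+1), F j * F (n-j) := by
    intro n
    rw [Finset.sum_mul]
    refine Finset.sum_congr rfl fun j hj => ?_
    rw [Finset.mem_range] at hj
    have : t^n = t^j * t^(n-j) := by
      rw [← pow_add, Nat.add_sub_cancel' (Nat.lt_succ_iff.1 hj)]
    rw [this, hF]
    ring
  have hconvU : ∀ n, (∑ j ∈ Finset.range (n+1), f j * u (n-j)) * t^n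
      = ∑ j ∈ Finset.range (n+1), F j * Uf (n-j) := by
    intro n
    rw [Finset.sum_mul]
    refine Finset.sum_congr rfl fun j hj => ?_
    rw [Finset.mem_range] at hj
    have : t^n = t^j * t^(n-j) := by
      rw [← pow_add, Nat.add_sub_cancel' (Nat.lt_succ_iff.1 hj)]
    rw [this, hF, hUf]
    ring
  -- Cauchy products
  have hcauchyF : (∑' n, F n) * (∑' n, F n) = ∑' n, ∑ j ∈ Finset.range (n+1), F j * F (n-j) :=
    tsum_mul_tsum_eq_tsum_sum_range_of_summable_norm hFnorm hFnorm
  have hcauchyU : (∑' n, F n) * (∑' n, Uf n) = ∑' n, ∑ j ∈ Finset.range (n+1), F j * Uf (n-j) :=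
    tsum_mul_tsum_eq_tsum_sum_range_of_summable_norm hFnorm hUnorm
  have hconvFs : Summable (fun n => ∑ j ∈ Finset.range (n+1), F j * F (n-j)) := by
    have := summable_norm_sum_mul_range_of_summable_norm hFnorm hFnorm
    exact this.of_norm
  have hconvUs : Summable (fun n => ∑ j ∈ Finset.range (n+1), F j * Uf (n-j)) := by
    have := summable_norm_sum_mul_range_of_summable_norm hFnorm hUnorm
    exact this.of_norm
  -- equation for Phi
  have hPhiEq : (∑' n, F n) = t + ((d:ℝ)-1) * t * (∑' n, F n)^2 := by
    have hF0 : F 0 = 0 := by simp [hF, hf0]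
    have hstep : ∀ n : ℕ, F (n+1)
        = (if n = 0 then t else 0)
          + ((d:ℝ)-1) * t * (∑ j ∈ Finset.range (n+1), F j * F (n-j)) := by
      intro n
      have : F (n+1) = f (n+1) * (t * t^n) := by rw [hF]; ring_nf
      rw [this, hfrec n]
      rw [← hconvF n]
      split_ifs with h
      · subst h; ring
      · ring
    have hcalc : (∑' n, F n)
        = t + ((d:ℝ)-1) * t * ((∑' n, F n) * (∑' n, F n)) := by
      calc (∑' n, F n) = F 0 + ∑' n, F (n+1) := Summable.tsum_eq_zero_add hFs
      _ = ∑' n, ((if n = 0 then t else 0)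
            + ((d:ℝ)-1) * t * (∑ j ∈ Finset.range (n+1), F j * F (n-j))) := by
          rw [hF0, zero_add]; exact tsum_congr hstep
      _ = (∑' n : ℕ, (if n = 0 then t else 0))
            + ∑' n, ((d:ℝ)-1) * t * (∑ j ∈ Finset.range (n+1), F j * F (n-j)) :=
          Summable.tsum_add ((hasSum_ite_eq 0 t).summable) (hconvFs.mul_left _)
      _ = t + (((d:ℝ)-1) * t) * ∑' n, ∑ j ∈ Finset.range (n+1), F j * F (n-j) := by
          rw [tsum_ite_eq, tsum_mul_left]
      _ = t + ((d:ℝ)-1) * t * ((∑' n, F n) * (∑' n, F n)) := by rw [← hcauchyF]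
    rw [sq]
    exact hcalc
  -- equation for U
  have hUEq : (∑' n, Uf n) * (1 - d * t * (∑' n, F n)) = 1 := by
    have hU0 : Uf 0 = 1 := by simp [hUf, hu0]
    have hstep : ∀ n : ℕ, Uf (n+1)
        = ((d:ℝ) * t) * (∑ j ∈ Finset.range (n+1), F j * Uf (n-j)) := by
      intro n
      have : Uf (n+1) = u (n+1) * (t * t^n) := by rw [hUf]; ring_nf
      rw [this, hurec n, ← hconvU n]
      ring
    have h1 : (∑' n, Uf n) = 1 + d * t * ((∑' n, F n) * (∑' n, Uf n)) := by
      calc (∑' n, Uf n) = Uf 0 + ∑' n, Uf (n+1) := Summable.tsum_eq_zero_add hsum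
      _ = 1 + ∑' n, ((d:ℝ) * t) * (∑ j ∈ Finset.range (n+1), F j * Uf (n-j)) := by
          rw [hU0]; exact congrArg _ (tsum_congr hstep)
      _ = 1 + ((d:ℝ) * t) * ∑' n, ∑ j ∈ Finset.range (n+1), F j * Uf (n-j) := by
          rw [tsum_mul_left]
      _ = 1 + d * t * ((∑' n, F n) * (∑' n, Uf n)) := by rw [← hcauchyU]
    nlinarith [h1]
  have hUge : 1 ≤ ∑' n, Uf n := by
    have := Summable.le_tsum hsum 0 (fun i _ => hUpos i)
    simpa [hUf, hu0] using this
  exact ⟨hFs, hPhiEq, hUEq, hUge⟩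

end RegTree

open RegTree in
/-- for the `d`-regular tree `T_d` (`d ≥ 3`), the URW localization
threshold is `σ*(T_d) = d/f_{oo}(1/d) = (d−1) − 1/(d−1)` and the `ℓ²`-eigenvector
threshold is `σ_{ℓ²}(T_d) = 2√(d−1)/f_{oo}(1/(2√(d−1))) = √(d−1) − 1/√(d−1)`; in
particular `σ_{ℓ²}(T_d) < σ*(T_d)`. -/
theorem regular_tree_thresholds
    {V : Type*} (G : SimpleGraph V) [∀ v : V, Fintype (G.neighborSet v)]
    (d : ℕ) (hd : 3 ≤ d)
    (htree : G.IsTree) (hreg : ∀ v : V, G.degree v = d)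
    (o : V)
    (hsum1 : Summable (fun n : ℕ => matPow (adjMat G) n o o * (1/(d:ℝ))^n))
    (hsum2 : Summable (fun n : ℕ =>
      matPow (adjMat G) n o o * (1/(2 * Real.sqrt ((d:ℝ) - 1)))^n)) :
    ((d : ℝ) / genFun (adjMat G) (1/(d:ℝ)) o o = ((d : ℝ) - 1) - 1/((d : ℝ) - 1)) ∧
    ((2 * Real.sqrt ((d:ℝ) - 1)) / genFun (adjMat G) (1/(2 * Real.sqrt ((d:ℝ) - 1))) o o
        = Real.sqrt ((d:ℝ) - 1) - 1/Real.sqrt ((d:ℝ) - 1)) ∧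
    ((2 * Real.sqrt ((d:ℝ) - 1)) / genFun (adjMat G) (1/(2 * Real.sqrt ((d:ℝ) - 1))) o o
        < (d : ℝ) / genFun (adjMat G) (1/(d:ℝ)) o o) := by
  classical
  -- basic numeric facts
  have hd3 : (3:ℝ) ≤ (d:ℝ) := by exact_mod_cast hd
  have hdm2 : (2:ℝ) ≤ (d:ℝ) - 1 := by linarith
  set s : ℝ := Real.sqrt ((d:ℝ) - 1) with hs
  have hs2 : s^2 = (d:ℝ) - 1 := Real.sq_sqrt (by linarith)
  have hs0 : 0 < s := Real.sqrt_pos.2 (by linarith)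
  have hs1 : 1 < s := by nlinarith
  have hsd : s < (d:ℝ) - 1 := by nlinarith
  have h2sd : 2*s ≤ (d:ℝ) := by nlinarith [sq_nonneg ((d:ℝ) - 2)]
  have hdne : (d:ℝ) ≠ 0 := by linarith
  have hdm1ne : (d:ℝ) - 1 ≠ 0 := by linarith
  have ht1 : (0:ℝ) < 1/(d:ℝ) := by positivity
  have ht2 : (0:ℝ) < 1/(2*s) := by positivity
  have ht12 : 1/(d:ℝ) ≤ 1/(2*s) := by
    apply one_div_le_one_div_of_le (by positivity) h2sd
  -- choose a neighbor of o
  obtain ⟨z₀, hz₀⟩ : ∃ w, G.Adj o w := by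
    rw [← SimpleGraph.degree_pos_iff_exists_adj]
    rw [hreg o]; omega
  have h₀ : G.Adj z₀ o := hz₀.symm
  -- the two instantiations of the analytic lemma
  have A1 := analytic d hd (fun n => matPow (adjMat G) n o o)
    (fun n => matPow (zadj G {o}) n z₀ o)
    (u_zero G o) (u_nonneg G o) (fun n => f_nonneg G n) (f_zero G h₀)
    (fun n => u_rec G htree d hreg h₀ n)
    (fun n => f_rec G htree d (by omega) hreg h₀ n)
    (1/(d:ℝ)) ht1 hsum1
  have A2 := analytic d hd (fun n => matPow (adjMat G) n o o)
    (fun n => matPow (zadj G {o}) n z₀ o)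
    (u_zero G o) (u_nonneg G o) (fun n => f_nonneg G n) (f_zero G h₀)
    (fun n => u_rec G htree d hreg h₀ n)
    (fun n => f_rec G htree d (by omega) hreg h₀ n)
    (1/(2*s)) ht2 hsum2
  obtain ⟨hFs1, hPhi1, hU1, hUge1⟩ := A1
  obtain ⟨hFs2, hPhi2, hU2, hUge2⟩ := A2
  set Φ₁ : ℝ := ∑' n, matPow (zadj G {o}) n z₀ o * (1/(d:ℝ))^n with hPhi1def
  set Φ₂ : ℝ := ∑' n, matPow (zadj G {o}) n z₀ o * (1/(2*s))^n with hPhi2def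
  set U₁ : ℝ := ∑' n, matPow (adjMat G) n o o * (1/(d:ℝ))^n with hU1def
  set U₂ : ℝ := ∑' n, matPow (adjMat G) n o o * (1/(2*s))^n with hU2def
  have hgen1 : genFun (adjMat G) (1/(d:ℝ)) o o = U₁ := rfl
  have hgen2 : genFun (adjMat G) (1/(2*s)) o o = U₂ := rfl
  -- monotonicity
  have hmono : Φ₁ ≤ Φ₂ := by
    refine Summable.tsum_le_tsum (fun n => ?_) hFs1 hFs2
    exact mul_le_mul_of_nonneg_left (pow_le_pow_left₀ ht1.le ht12 n) (f_nonneg G n)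
  clear_value Φ₁ Φ₂ U₁ U₂
  clear hFs1 hFs2 hPhi1def hPhi2def hU1def hU2def hsum1 hsum2
  -- value of Φ₂
  have e2 : Φ₂ * (2*s) = 1 + s^2 * Φ₂^2 := by
    have h := hPhi2
    have h2s : (2*s) * (1/(2*s)) = 1 := by field_simp
    calc Φ₂ * (2*s) = (1/(2*s) + ((d:ℝ)-1) * (1/(2*s)) * Φ₂^2) * (2*s) := by rw [← h]
    _ = (2*s) * (1/(2*s)) + ((d:ℝ)-1) * ((2*s) * (1/(2*s))) * Φ₂^2 := by ring
    _ = 1 + ((d:ℝ)-1) * Φ₂^2 := by rw [h2s]; ring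
    _ = 1 + s^2 * Φ₂^2 := by rw [hs2]
  have hPhi2val : Φ₂ = 1/s := by
    have hsq : (s*Φ₂ - 1)^2 = 0 := by linear_combination -e2
    have h0 : s*Φ₂ - 1 = 0 := pow_eq_zero_iff (n := 2) (by norm_num) |>.1 hsq
    rw [eq_div_iff hs0.ne']
    linarith
  -- value of Φ₁
  have e1 : (d:ℝ) * Φ₁ = 1 + ((d:ℝ)-1) * Φ₁^2 := by
    have h := hPhi1
    have hdd : (d:ℝ) * (1/(d:ℝ)) = 1 := by field_simp
    calc (d:ℝ) * Φ₁ = (1/(d:ℝ) + ((d:ℝ)-1) * (1/(d:ℝ)) * Φ₁^2) * (d:ℝ) := by rw [← h]; ring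
    _ = (d:ℝ) * (1/(d:ℝ)) + ((d:ℝ)-1) * ((d:ℝ) * (1/(d:ℝ))) * Φ₁^2 := by ring
    _ = 1 + ((d:ℝ)-1) * Φ₁^2 := by rw [hdd]; ring
  have hPhi1val : Φ₁ = 1/((d:ℝ)-1) := by
    have hprod : (Φ₁ - 1) * (((d:ℝ)-1)*Φ₁ - 1) = 0 := by linear_combination -e1
    rcases mul_eq_zero.1 hprod with h | h
    · exfalso
      have hlt : Φ₂ < 1 := by
        rw [hPhi2val]
        exact (div_lt_one hs0).2 hs1
      have : Φ₁ = 1 := by linarith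
      linarith
    · have : ((d:ℝ)-1) * Φ₁ = 1 := by linarith
      field_simp
      linarith
  -- conclusions
  have hU1ne : U₁ ≠ 0 := by linarith
  have hU2ne : U₂ ≠ 0 := by linarith
  have g1 : (d:ℝ) / U₁ = ((d:ℝ) - 1) - 1/((d:ℝ) - 1) := by
    rw [div_eq_iff hU1ne]
    rw [hPhi1val] at hU1
    field_simp at hU1 ⊢
    linear_combination (-(d:ℝ)) * hU1
  have g2 : (2*s) / U₂ = s - 1/s := by
    rw [div_eq_iff hU2ne]
    rw [hPhi2val] at hU2
    field_simp [hs0.ne'] at hU2 ⊢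
    linear_combination -hU2 + U₂ * hs2
  refine ⟨?_, ?_, ?_⟩
  · rw [hgen1]; exact g1
  · rw [hgen2]; exact g2
  · rw [hgen1, hgen2, g1, g2]
    have hinv : 1/((d:ℝ)-1) < 1/s := one_div_lt_one_div_of_lt hs0 hsd
    linarith
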